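/- For any connected graph G with at least two vertices and any integer n ≥ 3, the restricted edge-connectivity of the direct product G × T_n satisfies λ′(G × T_n) = min{n·ξ(G) + 2(n−1), n²·λ′(G)} (where the second term is interpreted as +∞ when G admits no restricted edge-cut). -/

import Mathlib

open SimpleGraph

/-- The direct (tensor/Kronecker) product of two simple graphs:
`(u₁, v₁)` and `(u₂, v₂)` are adjacent iff `u₁u₂ ∈ E(G)` and `v₁v₂ ∈ E(H)`. -/
def tensorProd {α β : Type*} (G : SimpleGraph α) (H : SimpleGraph β) :
    SimpleGraph (α × β) where
  Adj x y := G.Adj x.1 y.1 ∧ H.Adj x.2 y.2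
  symm := ⟨fun _ _ h => ⟨h.1.symm, h.2.symm⟩⟩
  loopless := ⟨fun _ h => G.loopless.irrefl _ h.1⟩

/-- The direct product `G × Tₙ` of a simple graph `G` with the total graph `Tₙ`
(the complete graph `Kₙ` with a loop added at every vertex):  since `Tₙ` has all
possible edges and loops, `(u₁, v₁)` is adjacent to `(u₂, v₂)` iff `u₁u₂ ∈ E(G)`. -/
def totalProd {α : Type*} (G : SimpleGraph α) (n : ℕ) :
    SimpleGraph (α × Fin n) where
  Adj x y := G.Adj x.1 y.1
  symm := ⟨fun _ _ (h : G.Adj _ _) => h.symm⟩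
  loopless := ⟨fun _ h => G.loopless.irrefl _ h⟩

/-- The direct product `K₂ × Kₙ`. -/
def K2timesKn (n : ℕ) : SimpleGraph (Fin 2 × Fin n) :=
  tensorProd (completeGraph (Fin 2)) (completeGraph (Fin n))

/-- The direct product `K₂ × Tₙ` (isomorphic to the complete bipartite graph `K_{n,n}`). -/
def K2timesTn (n : ℕ) : SimpleGraph (Fin 2 × Fin n) :=
  totalProd (completeGraph (Fin 2)) n

/-- `[A, V ∖ A]` : the set of edges of `G` with exactly one endpoint in `A`. -/
def cutEdges {α : Type*} (G : SimpleGraph α) (A : Set α) : Set (Sym2 α) :=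
  {e | e ∈ G.edgeSet ∧ ∃ u v, e = s(u, v) ∧ u ∈ A ∧ v ∉ A}

/-- `F` is an edge-cut of `G`: a set of edges whose deletion disconnects `G`. -/
def IsEdgeCut {α : Type*} (G : SimpleGraph α) (F : Set (Sym2 α)) : Prop :=
  F ⊆ G.edgeSet ∧ ¬ (G.deleteEdges F).Connected

/-- The edge-connectivity `λ(G)`: the minimum cardinality of an edge-cut. -/
noncomputable def edgeConn {α : Type*} (G : SimpleGraph α) : ℕ :=
  sInf {k | ∃ F : Finset (Sym2 α), IsEdgeCut G ↑F ∧ F.card = k}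

/-- `G` is super edge-connected (super-λ): every minimum edge-cut is exactly the
set of edges incident with some vertex. -/
def SuperEdgeConnected {α : Type*} (G : SimpleGraph α) : Prop :=
  ∀ F : Finset (Sym2 α), IsEdgeCut G ↑F → F.card = edgeConn G →
    ∃ v, (F : Set (Sym2 α)) = G.incidenceSet v

/-- `F` is a restricted edge-cut of `G`: its deletion disconnects `G` and every
connected component of `G − F` has at least two vertices. -/
def IsRestrictedEdgeCut {α : Type*} (G : SimpleGraph α) (F : Set (Sym2 α)) : Prop :=
  F ⊆ G.edgeSet ∧ ¬ (G.deleteEdges F).Connected ∧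
    ∀ c : (G.deleteEdges F).ConnectedComponent, c.supp.Nontrivial

/-- The restricted edge-connectivity `λ'(G) : ℕ∞`: the minimum cardinality of a
restricted edge-cut, and `+∞` (`⊤`) if no restricted edge-cut exists. -/
noncomputable def restrictedEdgeConn {α : Type*} (G : SimpleGraph α) : ℕ∞ :=
  sInf {k : ℕ∞ | ∃ F : Finset (Sym2 α), IsRestrictedEdgeCut G ↑F ∧ (F.card : ℕ∞) = k}

/-- `G` is super restricted edge-connected (super-λ'): every minimum restricted
edge-cut isolates an edge, i.e. some component of `G − F` is a single edge. -/
def SuperRestrictedEdgeConnected {α : Type*} (G : SimpleGraph α) : Prop :=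
  ∀ F : Finset (Sym2 α), IsRestrictedEdgeCut G ↑F →
    (F.card : ℕ∞) = restrictedEdgeConn G →
    ∃ u v, (G.deleteEdges ↑F).Adj u v ∧
      ((G.deleteEdges ↑F).connectedComponentMk u).supp = {u, v}

/-- The minimum edge-degree `ξ(G) = min { d(u) + d(v) − 2 : uv ∈ E(G) }`. -/
noncomputable def minEdgeDegree {α : Type*} (G : SimpleGraph α) : ℕ :=
  sInf {k | ∃ u v, G.Adj u v ∧ (G.neighborSet u).ncard + (G.neighborSet v).ncard - 2 = k}

set_option linter.unusedSectionVars false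
section Infra
open Finset
open scoped Classical
variable {α : Type*} [Fintype α] [DecidableEq α]

noncomputable def opairs (K : SimpleGraph α) : Finset (α × α) :=
  Finset.univ.filter (fun q => K.Adj q.1 q.2)

lemma mem_opairs {K : SimpleGraph α} {q : α × α} : q ∈ opairs K ↔ K.Adj q.1 q.2 := by
  simp [opairs]

noncomputable def ocut (K : SimpleGraph α) (A : Finset α) : Finset (α × α) :=
  (opairs K).filter (fun q => q.1 ∈ A ∧ q.2 ∉ A)

lemma mem_ocut {K : SimpleGraph α} {A : Finset α} {q : α × α} :
    q ∈ ocut K A ↔ K.Adj q.1 q.2 ∧ q.1 ∈ A ∧ q.2 ∉ A := by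
  simp [ocut, mem_opairs]

noncomputable def bcut (K : SimpleGraph α) (A : Finset α) : Finset (Sym2 α) :=
  (ocut K A).image (fun q => s(q.1, q.2))

lemma card_bcut (K : SimpleGraph α) (A : Finset α) :
    (bcut K A).card = (ocut K A).card := by
  refine Finset.card_image_of_injOn ?_
  rintro ⟨a, b⟩ hab ⟨c, d⟩ hcd h
  simp only [mem_coe, mem_ocut] at hab hcd
  simp only [Sym2.eq, Sym2.rel_iff', Prod.mk.injEq, Prod.swap_prod_mk] at h
  rcases h with ⟨rfl, rfl⟩ | ⟨rfl, rfl⟩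
  · rfl
  · exact absurd hcd.2.1 hab.2.2

lemma sym2_mem_bcut {K : SimpleGraph α} {A : Finset α} {u v : α} :
    s(u, v) ∈ bcut K A ↔ K.Adj u v ∧ ((u ∈ A ∧ v ∉ A) ∨ (v ∈ A ∧ u ∉ A)) := by
  constructor
  · intro h
    simp only [bcut, mem_image] at h
    obtain ⟨⟨a, b⟩, hab, h⟩ := h
    rw [mem_ocut] at hab
    simp only [Sym2.eq, Sym2.rel_iff', Prod.mk.injEq, Prod.swap_prod_mk] at h
    rcases h with ⟨rfl, rfl⟩ | ⟨rfl, rfl⟩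
    · exact ⟨hab.1, Or.inl hab.2⟩
    · exact ⟨hab.1.symm, Or.inr hab.2⟩
  · rintro ⟨hadj, h | h⟩
    · exact mem_image.2 ⟨(u, v), mem_ocut.2 ⟨hadj, h⟩, rfl⟩
    · exact mem_image.2 ⟨(v, u), mem_ocut.2 ⟨hadj.symm, h⟩, Sym2.eq_swap⟩

lemma bcut_subset_edgeSet (K : SimpleGraph α) (A : Finset α) :
    ↑(bcut K A) ⊆ K.edgeSet := by
  rintro e he
  simp only [mem_coe, bcut, mem_image] at he
  obtain ⟨q, hq, rfl⟩ := he
  exact (mem_ocut.1 hq).1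

lemma deleteEdges_bcut_adj {K : SimpleGraph α} {A : Finset α} {u v : α} :
    (K.deleteEdges ↑(bcut K A)).Adj u v ↔ K.Adj u v ∧ (u ∈ A ↔ v ∈ A) := by
  rw [SimpleGraph.deleteEdges_adj]
  simp only [mem_coe, sym2_mem_bcut]
  constructor
  · rintro ⟨h, h2⟩
    refine ⟨h, ?_⟩
    by_cases hu : u ∈ A <;> by_cases hv : v ∈ A
    · exact iff_of_true hu hv
    · exact absurd ⟨h, Or.inl ⟨hu, hv⟩⟩ h2
    · exact absurd ⟨h, Or.inr ⟨hv, hu⟩⟩ h2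
    · exact iff_of_false hu hv
  · rintro ⟨h, hiff⟩
    refine ⟨h, ?_⟩
    rintro ⟨-, ⟨hu, hv⟩ | ⟨hv, hu⟩⟩
    · exact hv (hiff.1 hu)
    · exact hu (hiff.2 hv)

lemma reachable_bcut_side {K : SimpleGraph α} {A : Finset α} {u v : α}
    (h : (K.deleteEdges ↑(bcut K A)).Reachable u v) : u ∈ A ↔ v ∈ A := by
  obtain ⟨w⟩ := h
  induction w with
  | nil => rfl
  | cons h p ih => exact (deleteEdges_bcut_adj.1 h).2.trans ih

lemma exists_adj_of_reachable_ne {K : SimpleGraph α} {u v : α}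
    (h : K.Reachable u v) (hne : u ≠ v) : ∃ w, K.Adj u w := by
  obtain ⟨w⟩ := h
  cases w with
  | nil => exact absurd rfl hne
  | cons h p => exact ⟨_, h⟩

lemma nontrivial_comps {K : SimpleGraph α} (h : ∀ p, ∃ q, K.Adj p q)
    (c : K.ConnectedComponent) : c.supp.Nontrivial := by
  obtain ⟨p, rfl⟩ := c.exists_rep
  obtain ⟨q, hq⟩ := h p
  exact ⟨p, rfl, q, (SimpleGraph.ConnectedComponent.connectedComponentMk_eq_of_adj hq.symm :), hq.ne⟩

lemma not_connected_of (K : SimpleGraph α) (u v : α) (h : ¬ K.Reachable u v) :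
    ¬ K.Connected := fun hc => h (hc.preconnected u v)

lemma bcut_isRestricted {K : SimpleGraph α} {A : Finset α}
    (hside : ∀ p, ∃ q, K.Adj p q ∧ (p ∈ A ↔ q ∈ A))
    (hA : A.Nonempty) (hA' : ∃ p, p ∉ A) :
    IsRestrictedEdgeCut K ↑(bcut K A) := by
  refine ⟨bcut_subset_edgeSet K A, ?_, ?_⟩
  · obtain ⟨u, hu⟩ := hA
    obtain ⟨v, hv⟩ := hA'
    refine not_connected_of _ u v (fun h => hv ((reachable_bcut_side h).1 hu))
  · refine nontrivial_comps (fun p => ?_)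
    obtain ⟨q, hq, hiff⟩ := hside p
    exact ⟨q, deleteEdges_bcut_adj.2 ⟨hq, hiff⟩⟩

lemma restrictedEdgeConn_le {K : SimpleGraph α} {F : Finset (Sym2 α)}
    (h : IsRestrictedEdgeCut K ↑F) : restrictedEdgeConn K ≤ (F.card : ℕ∞) :=
  sInf_le ⟨F, h, rfl⟩

lemma restrictedEdgeConn_exists_min {K : SimpleGraph α}
    (h : restrictedEdgeConn K ≠ ⊤) :
    ∃ F : Finset (Sym2 α), IsRestrictedEdgeCut K ↑F ∧
      (F.card : ℕ∞) = restrictedEdgeConn K := by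
  have hne : {m : ℕ | ∃ F : Finset (Sym2 α), IsRestrictedEdgeCut K ↑F ∧ F.card = m}.Nonempty := by
    by_contra hempty
    apply h
    rw [restrictedEdgeConn]
    rw [Set.not_nonempty_iff_eq_empty] at hempty
    convert sInf_empty
    · rfl
    rw [Set.eq_empty_iff_forall_notMem]
    rintro k ⟨F, hF, rfl⟩
    exact Set.eq_empty_iff_forall_notMem.1 hempty F.card ⟨F, hF, rfl⟩
  obtain ⟨F, hF, hcard⟩ := Nat.sInf_mem hne
  refine ⟨F, hF, le_antisymm ?_ (restrictedEdgeConn_le hF)⟩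
  refine le_sInf ?_
  rintro k ⟨F', hF', rfl⟩
  rw [hcard]
  have hmem : F'.card ∈ {m : ℕ | ∃ F : Finset (Sym2 α), IsRestrictedEdgeCut K ↑F ∧ F.card = m} :=
    ⟨F', hF', rfl⟩
  exact_mod_cast Nat.sInf_le hmem

end Infra
section Infra2
open Finset
open scoped Classical
variable {α : Type*} [Fintype α] [DecidableEq α]

lemma ncard_neighborSet (G : SimpleGraph α) (u : α) :
    (G.neighborSet u).ncard = G.degree u := by
  rw [Set.ncard_eq_toFinset_card', SimpleGraph.degree, SimpleGraph.neighborFinset]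

lemma exists_adj_all {G : SimpleGraph α} (hG : G.Connected) (hV : 2 ≤ Fintype.card α)
    (u : α) : ∃ v, G.Adj u v := by
  obtain ⟨v, hv⟩ := Fintype.exists_ne_of_one_lt_card (by omega) u
  exact exists_adj_of_reachable_ne (hG.preconnected u v) (Ne.symm hv)

lemma minEdgeDegree_le {G : SimpleGraph α} {u v : α} (h : G.Adj u v) :
    minEdgeDegree G ≤ G.degree u + G.degree v - 2 :=
  Nat.sInf_le ⟨u, v, h, by rw [ncard_neighborSet, ncard_neighborSet]⟩

lemma exists_minEdgeDegree {G : SimpleGraph α} (hG : G.Connected) (hV : 2 ≤ Fintype.card α) :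
    ∃ u v, G.Adj u v ∧ G.degree u + G.degree v - 2 = minEdgeDegree G := by
  obtain ⟨a⟩ := hG.nonempty
  obtain ⟨b, hb⟩ := exists_adj_all hG hV a
  have hne : {k | ∃ u v, G.Adj u v ∧ (G.neighborSet u).ncard + (G.neighborSet v).ncard - 2 = k}.Nonempty :=
    ⟨_, a, b, hb, rfl⟩
  obtain ⟨u, v, huv, hval⟩ := Nat.sInf_mem hne
  exact ⟨u, v, huv, by rw [minEdgeDegree, ← hval, ncard_neighborSet, ncard_neighborSet]⟩

lemma degree_pos {G : SimpleGraph α} (hG : G.Connected) (hV : 2 ≤ Fintype.card α)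
    (u : α) : 1 ≤ G.degree u := by
  obtain ⟨v, hv⟩ := exists_adj_all hG hV u
  rw [← SimpleGraph.card_neighborFinset_eq_degree]
  exact Finset.card_pos.2 ⟨v, by simpa using hv⟩

lemma exists_side_of_restricted [Nonempty α] {K : SimpleGraph α} {F : Finset (Sym2 α)}
    (h : IsRestrictedEdgeCut K ↑F) :
    ∃ S : Finset α, S.Nonempty ∧ (∃ p, p ∉ S) ∧
      (∀ p ∈ S, ∃ q ∈ S, K.Adj p q) ∧ (∀ p, p ∉ S → ∃ q, q ∉ S ∧ K.Adj p q) ∧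
      (bcut K S).card ≤ F.card := by
  set K' := K.deleteEdges ↑F with hK'
  have hnc : ¬ K'.Preconnected := fun hp => h.2.1 ((K.deleteEdges ↑F).connected_iff.mpr ⟨hp, ‹Nonempty α›⟩)
  rw [SimpleGraph.Preconnected] at hnc
  push_neg at hnc
  obtain ⟨a, b, hab⟩ := hnc
  set c := K'.connectedComponentMk a with hc
  set S : Finset α := univ.filter (fun p => K'.connectedComponentMk p = c) with hS
  have hmem : ∀ p, p ∈ S ↔ K'.connectedComponentMk p = c := by
    intro p; simp [hS]
  have hnbr : ∀ p : α, ∃ q, K'.Adj p q ∧ K'.connectedComponentMk q = K'.connectedComponentMk p := by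
    intro p
    obtain ⟨x, hx, y, hy, hxy⟩ := h.2.2 (K'.connectedComponentMk p)
    rw [SimpleGraph.ConnectedComponent.mem_supp_iff] at hx hy
    have key : ∃ z, z ≠ p ∧ K'.connectedComponentMk z = K'.connectedComponentMk p := by
      by_cases hxp : x = p
      · exact ⟨y, by rintro rfl; exact hxy hxp, hy⟩
      · exact ⟨x, hxp, hx⟩
    obtain ⟨z, hzp, hz⟩ := key
    have hreach : K'.Reachable p z := (SimpleGraph.ConnectedComponent.exact hz).symm
    obtain ⟨w, hw⟩ := exists_adj_of_reachable_ne hreach (Ne.symm hzp)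
    exact ⟨w, hw, SimpleGraph.ConnectedComponent.connectedComponentMk_eq_of_adj hw.symm⟩
  refine ⟨S, ⟨a, (hmem a).2 rfl⟩, ⟨b, fun hbS => hab ?_⟩, ?_, ?_, ?_⟩
  · exact (SimpleGraph.ConnectedComponent.exact ((hmem b).1 hbS)).symm
  · intro p hp
    obtain ⟨q, hq, hqc⟩ := hnbr p
    exact ⟨q, (hmem q).2 (hqc.trans ((hmem p).1 hp)), hq.1⟩
  · intro p hp
    obtain ⟨q, hq, hqc⟩ := hnbr p
    refine ⟨q, fun hqS => hp ((hmem p).2 (hqc ▸ (hmem q).1 hqS)), hq.1⟩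
  · refine Finset.card_le_card (fun e he => ?_)
    rw [bcut, mem_image] at he
    obtain ⟨⟨x, y⟩, hxy, rfl⟩ := he
    rw [mem_ocut] at hxy
    by_contra heF
    have : K'.Adj x y := by
      rw [hK', SimpleGraph.deleteEdges_adj]
      exact ⟨hxy.1, heF⟩
    exact hxy.2.2 ((hmem y).2
      ((SimpleGraph.ConnectedComponent.connectedComponentMk_eq_of_adj this.symm).trans
        ((hmem x).1 hxy.2.1)))

end Infra2

section Prod
open Finset
open scoped Classical
variable {V : Type*} [Fintype V] [DecidableEq V] (G : SimpleGraph V) (n : ℕ)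

lemma totalProd_adj {p q : V × Fin n} : (totalProd G n).Adj p q ↔ G.Adj p.1 q.1 := Iff.rfl

/-- number of chosen points in column `u`. -/
noncomputable def colCard' (m : ℕ) (S : Finset (V × Fin m)) (u : V) : ℕ :=
  (univ.filter fun i : Fin m => (u, i) ∈ S).card

lemma colCard_le (S : Finset (V × Fin n)) (u : V) : colCard' n S u ≤ n := by
  rw [colCard']
  exact (Finset.card_filter_le _ _).trans (by simp)

lemma colCard_pos {S : Finset (V × Fin n)} {u : V} {i : Fin n} (h : (u, i) ∈ S) :
    0 < colCard' n S u :=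
  Finset.card_pos.2 ⟨i, by simp [h]⟩

lemma colCard_lt {S : Finset (V × Fin n)} {u : V} {i : Fin n} (h : (u, i) ∉ S) :
    colCard' n S u < n := by
  rcases lt_or_eq_of_le (colCard_le n S u) with hlt | heq
  · exact hlt
  · exfalso
    have huniv : (univ.filter fun i : Fin n => (u, i) ∈ S) = univ := by
      apply Finset.eq_univ_of_card
      simpa [colCard', Fintype.card_fin] using heq
    have hi := Finset.mem_univ i
    rw [← huniv, Finset.mem_filter] at hi
    exact h hi.2

lemma colCard_all {S : Finset (V × Fin n)} {u : V} (h : colCard' n S u = n) (i : Fin n) :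
    (u, i) ∈ S := by
  by_contra hi
  exact absurd h (Nat.ne_of_lt (colCard_lt n hi))

lemma sum_formula (S : Finset (V × Fin n)) :
    (ocut (totalProd G n) S).card
      = ∑ q ∈ opairs G, colCard' n S q.1 * (n - colCard' n S q.2) := by
  rw [Finset.card_eq_sum_card_fiberwise
    (f := fun q : (V × Fin n) × (V × Fin n) => (q.1.1, q.2.1)) (t := opairs G)
    (fun q hq => mem_opairs.2 (totalProd_adj G n |>.1 (mem_ocut.1 hq).1))]
  refine Finset.sum_congr rfl (fun b hb => ?_)
  obtain ⟨b1, b2⟩ := b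
  rw [mem_opairs] at hb
  have htarget : ((univ.filter fun i : Fin n => (b1, i) ∈ S)
      ×ˢ (univ.filter fun j : Fin n => (b2, j) ∉ S)).card
      = colCard' n S b1 * (n - colCard' n S b2) := by
    rw [Finset.card_product]
    congr 1
    have := Finset.card_filter_add_card_filter_not
      (s := (univ : Finset (Fin n))) (p := fun j => (b2, j) ∈ S)
    rw [Finset.card_univ, Fintype.card_fin] at this
    unfold colCard'
    omega
  rw [← htarget]
  refine Finset.card_nbij' (fun q => (q.1.2, q.2.2)) (fun p => ((b1, p.1), (b2, p.2)))
    ?_ ?_ ?_ ?_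
  · rintro ⟨⟨u, i⟩, ⟨v, j⟩⟩ hq
    simp only [Finset.mem_coe, mem_filter, mem_ocut, Prod.mk.injEq] at hq
    obtain ⟨⟨hadj, hS1, hS2⟩, h1, h2⟩ := hq
    subst h1; subst h2
    simp only [Finset.mem_coe, Finset.mem_product, mem_filter, mem_univ, true_and]
    exact ⟨hS1, hS2⟩
  · rintro ⟨i, j⟩ hp
    simp only [Finset.mem_coe, Finset.mem_product, mem_filter, mem_univ, true_and] at hp
    simp only [Finset.mem_coe, mem_filter, mem_ocut, Prod.mk.injEq]
    exact ⟨⟨(totalProd_adj G n).2 hb, hp.1, hp.2⟩, trivial, trivial⟩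
  · rintro ⟨⟨u, i⟩, ⟨v, j⟩⟩ hq
    simp only [Finset.mem_coe, mem_filter, Prod.mk.injEq] at hq
    obtain ⟨-, h1, h2⟩ := hq
    subst h1; subst h2
    rfl
  · rintro ⟨i, j⟩ _
    rfl

end Prod
section Infra3
open Finset
open scoped Classical
variable {α : Type*} [Fintype α] [DecidableEq α]

lemma exists_adj_of_comps_nontrivial {K : SimpleGraph α}
    (h : ∀ c : K.ConnectedComponent, c.supp.Nontrivial) (u : α) : ∃ v, K.Adj u v := by
  obtain ⟨x, hx, y, hy, hxy⟩ := h (K.connectedComponentMk u)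
  rw [SimpleGraph.ConnectedComponent.mem_supp_iff] at hx hy
  have key : ∃ z, z ≠ u ∧ K.connectedComponentMk z = K.connectedComponentMk u := by
    by_cases hxu : x = u
    · exact ⟨y, by rintro rfl; exact hxy hxu, hy⟩
    · exact ⟨x, hxu, hx⟩
  obtain ⟨z, hzu, hz⟩ := key
  exact exists_adj_of_reachable_ne (SimpleGraph.ConnectedComponent.exact hz).symm (Ne.symm hzu)

lemma sum_opairs (K : SimpleGraph α) (f : α × α → ℕ) :
    ∑ q ∈ opairs K, f q = ∑ a : α, ∑ b ∈ K.neighborFinset a, f (a, b) := by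
  rw [opairs, Finset.sum_filter, ← Finset.univ_product_univ, Finset.sum_product]
  refine Finset.sum_congr rfl fun a _ => ?_
  rw [SimpleGraph.neighborFinset_eq_filter, Finset.sum_filter]

end Infra3

section Upper
open Finset
open scoped Classical
variable {V : Type*} [Fintype V] [DecidableEq V] (G : SimpleGraph V) (n : ℕ)

lemma upper_xi (hG : G.Connected) (hV : 2 ≤ Fintype.card V) (hn : 3 ≤ n) :
    restrictedEdgeConn (totalProd G n) ≤ ((n * minEdgeDegree G + 2 * (n - 1) : ℕ) : ℕ∞) := by
  obtain ⟨u₀, v₀, huv, hxi⟩ := exists_minEdgeDegree hG hV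
  have hne : u₀ ≠ v₀ := huv.ne
  set i0 : Fin n := ⟨0, by omega⟩ with hi0
  set j1 : Fin n := ⟨1, by omega⟩ with hj1
  have hij : j1 ≠ i0 := by simp [hi0, hj1, Fin.ext_iff]
  set Se : Finset (V × Fin n) := {(u₀, i0), (v₀, i0)} with hSe
  have hmemSe : ∀ p : V × Fin n, p ∈ Se ↔ p = (u₀, i0) ∨ p = (v₀, i0) := by
    intro p; simp [hSe]
  -- it is a restricted edge cut
  have hcut : IsRestrictedEdgeCut (totalProd G n) ↑(bcut (totalProd G n) Se) := by
    refine bcut_isRestricted ?_ ⟨(u₀, i0), (hmemSe _).2 (Or.inl rfl)⟩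
      ⟨(u₀, j1), fun h => ?_⟩
    · rintro ⟨w, i⟩
      by_cases hw : (w, i) ∈ Se
      · rcases (hmemSe _).1 hw with h | h
        · refine ⟨(v₀, i0), ?_, ?_⟩
          · rw [h]; exact (totalProd_adj G n).2 huv
          · simp [hw, (hmemSe _).2 (Or.inr rfl)]
        · refine ⟨(u₀, i0), ?_, ?_⟩
          · rw [h]; exact (totalProd_adj G n).2 huv.symm
          · simp [hw, (hmemSe _).2 (Or.inl rfl)]
      · obtain ⟨v, hv⟩ := exists_adj_all hG hV w
        refine ⟨(v, j1), (totalProd_adj G n).2 hv, ?_⟩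
        have : (v, j1) ∉ Se := by
          intro hmem
          rcases (hmemSe _).1 hmem with h | h <;> exact hij (congrArg Prod.snd h)
        simp [hw, this]
    · rcases (hmemSe _).1 h with h | h
      · exact hij (congrArg Prod.snd h)
      · exact hij (congrArg Prod.snd h)
  -- cardinality
  have hcol_u : colCard' n Se u₀ = 1 := by
    have huniv : (univ.filter fun i : Fin n => (u₀, i) ∈ Se) = {i0} := by
      ext i
      simp [hmemSe, Prod.ext_iff, hne]
    rw [colCard', huniv, Finset.card_singleton]
  have hcol_v : colCard' n Se v₀ = 1 := by
    have huniv : (univ.filter fun i : Fin n => (v₀, i) ∈ Se) = {i0} := by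
      ext i
      simp [hmemSe, Prod.ext_iff, Ne.symm hne]
    rw [colCard', huniv, Finset.card_singleton]
  have hcol_other : ∀ w, w ≠ u₀ → w ≠ v₀ → colCard' n Se w = 0 := by
    intro w h1 h2
    rw [colCard', Finset.card_eq_zero]
    ext i
    simp [hmemSe, Prod.ext_iff, h1, h2]
  -- compute the cut size
  have hinner : ∀ a b : V, G.Adj a b →
      (∑ c ∈ G.neighborFinset a, (n - colCard' n Se c)) = n * G.degree a - 1 →
      True := fun _ _ _ _ => trivial
  have hcard : (bcut (totalProd G n) Se).card
      = n * (minEdgeDegree G) + 2 * (n - 1) := by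
    rw [card_bcut, sum_formula,
      sum_opairs G (fun q => colCard' n Se q.1 * (n - colCard' n Se q.2))]
    have hsplit : ∀ a₀ b₀ : V, G.Adj a₀ b₀ → colCard' n Se b₀ = 1 →
        (∀ c ∈ G.neighborFinset a₀, c ≠ b₀ → colCard' n Se c = 0) →
        ∑ b ∈ G.neighborFinset a₀, colCard' n Se a₀ * (n - colCard' n Se b)
          = colCard' n Se a₀ * ((n - 1) + (G.degree a₀ - 1) * n) := by
      intro a₀ b₀ hab hb hothers
      rw [← Finset.mul_sum]
      congr 1
      rw [← Finset.add_sum_erase _ _ (by simpa using hab), hb]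
      congr 1
      rw [Finset.sum_congr rfl (fun c hc => ?_), Finset.sum_const, smul_eq_mul,
        Finset.card_erase_of_mem (by simpa using hab),
        SimpleGraph.card_neighborFinset_eq_degree]
      rw [hothers c (Finset.mem_of_mem_erase hc) (Finset.ne_of_mem_erase hc), Nat.sub_zero]
    have hmem_v : v₀ ∈ (univ.erase u₀) := mem_erase.2 ⟨Ne.symm hne, mem_univ _⟩
    rw [← Finset.add_sum_erase _ _ (mem_univ u₀), ← Finset.add_sum_erase _ _ hmem_v,
      hsplit u₀ v₀ huv hcol_v
        (fun c hc hcb => hcol_other c ((SimpleGraph.mem_neighborFinset _ _ _).1 hc).ne' hcb),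
      hsplit v₀ u₀ huv.symm hcol_u
        (fun c hc hcb => hcol_other c hcb ((SimpleGraph.mem_neighborFinset _ _ _).1 hc).ne'),
      Finset.sum_eq_zero (fun a ha => ?_), hcol_u, hcol_v, one_mul, one_mul]
    · have hd1 : 1 ≤ G.degree u₀ := degree_pos hG hV u₀
      have hd2 : 1 ≤ G.degree v₀ := degree_pos hG hV v₀
      obtain ⟨a', ha'⟩ : ∃ k, G.degree u₀ = k + 1 := ⟨G.degree u₀ - 1, by omega⟩
      obtain ⟨b', hb'⟩ : ∃ k, G.degree v₀ = k + 1 := ⟨G.degree v₀ - 1, by omega⟩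
      have hxi' : minEdgeDegree G = a' + b' := by omega
      rw [ha', hb', hxi']
      simp only [Nat.add_sub_cancel]
      ring
    · have ha1 : a ≠ v₀ := Finset.ne_of_mem_erase ha
      have ha2 : a ≠ u₀ := Finset.ne_of_mem_erase (Finset.mem_of_mem_erase ha)
      refine Finset.sum_eq_zero fun b _ => ?_
      simp [hcol_other a ha2 ha1]
  rw [← hcard]
  exact restrictedEdgeConn_le hcut

lemma upper_lift (hG : G.Connected) (hn : 3 ≤ n) :
    restrictedEdgeConn (totalProd G n)
      ≤ ((n ^ 2 : ℕ) : ℕ∞) * restrictedEdgeConn G := by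
  by_cases htop : restrictedEdgeConn G = ⊤
  · rw [htop]
    rw [ENat.mul_top (Nat.cast_ne_zero.2 (pow_ne_zero 2 (by omega)) : ((n ^ 2 : ℕ) : ℕ∞) ≠ 0)]
    exact le_top
  obtain ⟨F₀, hF₀, hF₀card⟩ := restrictedEdgeConn_exists_min htop
  set H := totalProd G n with hH
  set liftF : Finset (Sym2 (V × Fin n)) :=
    H.edgeFinset.filter (fun e => Sym2.map Prod.fst e ∈ F₀) with hliftF
  have hadj : ∀ p q : V × Fin n,
      (H.deleteEdges ↑liftF).Adj p q ↔ (G.deleteEdges ↑F₀).Adj p.1 q.1 := by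
    intro p q
    rw [SimpleGraph.deleteEdges_adj, SimpleGraph.deleteEdges_adj]
    simp only [hliftF, mem_coe, mem_filter, SimpleGraph.mem_edgeFinset,
      SimpleGraph.mem_edgeSet, Sym2.map_pair_eq]
    constructor
    · rintro ⟨h1, h2⟩
      exact ⟨h1, fun hmem => h2 ⟨h1, hmem⟩⟩
    · rintro ⟨h1, h2⟩
      exact ⟨h1, fun hmem => h2 hmem.2⟩
  have hproj : ∀ p q : V × Fin n, (H.deleteEdges ↑liftF).Reachable p q →
      (G.deleteEdges ↑F₀).Reachable p.1 q.1 := by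
    intro p q hpq
    obtain ⟨w⟩ := hpq
    induction w with
    | nil => exact SimpleGraph.Reachable.refl _
    | cons h p ih => exact ((hadj _ _).1 h).reachable.trans ih
  have hcut : IsRestrictedEdgeCut H ↑liftF := by
    refine ⟨?_, ?_, ?_⟩
    · intro e he
      simp only [hliftF, mem_coe, mem_filter, SimpleGraph.mem_edgeFinset] at he
      exact he.1
    · have hnonV : Nonempty V := hG.nonempty
      have hncG : ¬ (G.deleteEdges ↑F₀).Preconnected := fun hp =>
        hF₀.2.1 ((G.deleteEdges ↑F₀).connected_iff.mpr ⟨hp, hnonV⟩)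
      rw [SimpleGraph.Preconnected] at hncG
      push_neg at hncG
      obtain ⟨a, b, hab⟩ := hncG
      exact not_connected_of _ (a, (⟨0, by omega⟩ : Fin n)) (b, (⟨0, by omega⟩ : Fin n))
        (fun hr => hab (hproj _ _ hr))
    · refine nontrivial_comps (fun p => ?_)
      obtain ⟨v, hv⟩ := exists_adj_of_comps_nontrivial hF₀.2.2 p.1
      exact ⟨(v, p.2), (hadj _ _).2 hv⟩
  have hcard : liftF.card ≤ F₀.card * n ^ 2 := by
    rw [Finset.card_eq_sum_card_fiberwise
      (s := liftF) (f := fun e => Sym2.map Prod.fst e) (t := F₀)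
      (fun e he => (Finset.mem_filter.1 he).2)]
    refine (Finset.sum_le_sum (fun b _ => ?_)).trans_eq (by
      rw [Finset.sum_const, smul_eq_mul])
    induction b using Sym2.ind with
    | _ u v =>
      refine (Finset.card_le_card (?_ :
          liftF.filter (fun e => Sym2.map Prod.fst e = s(u, v))
            ⊆ (univ : Finset (Fin n × Fin n)).image
                (fun ij => s((u, ij.1), (v, ij.2))))).trans ?_
      · intro e he
        rw [mem_filter] at he
        induction e using Sym2.ind with
        | _ p q =>
          rw [Sym2.map_pair_eq, Sym2.eq, Sym2.rel_iff'] at he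
          rcases he.2 with h | h
          · have h1 : p.1 = u := congrArg Prod.fst h
            have h2 : q.1 = v := congrArg Prod.snd h
            refine Finset.mem_image.2 ⟨(p.2, q.2), mem_univ _, ?_⟩
            rw [← h1, ← h2]
          · have h1 : p.1 = v := congrArg Prod.fst h
            have h2 : q.1 = u := congrArg Prod.snd h
            refine Finset.mem_image.2 ⟨(q.2, p.2), mem_univ _, ?_⟩
            rw [← h2, ← h1]
            simp [Sym2.eq_swap]
      · exact (Finset.card_image_le).trans
          (by rw [Finset.card_univ, Fintype.card_prod, Fintype.card_fin, pow_two])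
  calc restrictedEdgeConn H ≤ (liftF.card : ℕ∞) := restrictedEdgeConn_le hcut
    _ ≤ ((F₀.card * n ^ 2 : ℕ) : ℕ∞) := by exact_mod_cast hcard
    _ = ((n ^ 2 : ℕ) : ℕ∞) * restrictedEdgeConn G := by
        rw [← hF₀card]
        push_cast
        ring

end Upper
section Core
open Finset
open scoped Classical
variable {V : Type*} [Fintype V] [DecidableEq V] (G : SimpleGraph V) (n : ℕ)

lemma sum_filter_fst (f : V × V → ℕ) (u : V) :
    ∑ q ∈ (opairs G).filter (fun q => q.1 = u), f q
      = ∑ b ∈ G.neighborFinset u, f (u, b) := by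
  refine Finset.sum_nbij' (fun q => q.2) (fun b => (u, b)) ?_ ?_ ?_ ?_ ?_
  · rintro ⟨a, b⟩ hq
    simp only [mem_filter, mem_opairs] at hq
    obtain ⟨hadj, rfl⟩ := hq
    simpa using hadj
  · intro b hb
    exact Finset.mem_filter.2 ⟨mem_opairs.2 (by simpa using hb : G.Adj u b), rfl⟩
  · rintro ⟨a, b⟩ hq
    simp only [mem_filter] at hq
    rw [← hq.2]
  · intro b _
    rfl
  · rintro ⟨a, b⟩ hq
    simp only [mem_filter] at hq
    rw [← hq.2]

lemma sum_filter_snd (f : V × V → ℕ) (u : V) (T : Finset V) :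
    ∑ q ∈ (opairs G).filter (fun q => q.2 = u ∧ q.1 ∉ T), f q
      = ∑ b ∈ G.neighborFinset u \ T, f (b, u) := by
  refine Finset.sum_nbij' (fun q => q.1) (fun b => (b, u)) ?_ ?_ ?_ ?_ ?_
  · rintro ⟨a, b⟩ hq
    simp only [mem_filter, mem_opairs] at hq
    obtain ⟨hadj, rfl, hT⟩ := hq
    simp only [Finset.mem_sdiff]
    exact ⟨by simpa using hadj.symm, hT⟩
  · intro b hb
    simp only [Finset.mem_sdiff, SimpleGraph.mem_neighborFinset] at hb
    exact Finset.mem_filter.2 ⟨mem_opairs.2 (hb.1.symm : G.Adj b u), rfl, hb.2⟩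
  · rintro ⟨a, b⟩ hq
    simp only [mem_filter] at hq
    rw [← hq.2.1]
  · intro b _
    rfl
  · rintro ⟨a, b⟩ hq
    simp only [mem_filter] at hq
    rw [← hq.2.1]

lemma gxy_ge_n {a y : ℕ} (ha : 1 ≤ a) (ha' : a < n) (hy : y ≤ n) :
    n ≤ a * (n - y) + y * (n - a) := by
  have t1 : 1 * (n - y) ≤ a * (n - y) := Nat.mul_le_mul_right _ ha
  have t2 : y * 1 ≤ y * (n - a) := Nat.mul_le_mul_left _ (by omega)
  omega

lemma g2_ge {a c : ℕ} (ha : 1 ≤ a) (ha' : a < n) (hc : 1 ≤ c) (hc' : c < n) :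
    2 * n - 2 ≤ a * (n - c) + c * (n - a) := by
  have e1 : a * (n - c) = (n - c) + (a - 1) * (n - c) := by
    nth_rewrite 1 [show a = 1 + (a - 1) by omega]
    ring
  have e2 : c * (n - a) = (n - a) + (c - 1) * (n - a) := by
    nth_rewrite 1 [show c = 1 + (c - 1) by omega]
    ring
  have t1 : (a - 1) * 1 ≤ (a - 1) * (n - c) := Nat.mul_le_mul_left _ (by omega)
  have t2 : (c - 1) * 1 ≤ (c - 1) * (n - a) := Nat.mul_le_mul_left _ (by omega)
  omega

lemma pn_le {a p q : ℕ} (han : a ≤ n) : n * min p q ≤ p * (n - a) + q * a := by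
  rcases Nat.le_total p q with h | h
  · have h1 : p * a ≤ q * a := Nat.mul_le_mul_right a h
    have h2 : p * (n - a) + p * a = p * n := by rw [← Nat.mul_add]; congr 1; omega
    rw [min_eq_left h]
    have h4 : n * p = p * n := Nat.mul_comm n p
    omega
  · have h1 : q * (n - a) ≤ p * (n - a) := Nat.mul_le_mul_right _ h
    have h2 : q * (n - a) + q * a = q * n := by rw [← Nat.mul_add]; congr 1; omega
    rw [min_eq_right h]
    have h4 : n * q = q * n := Nat.mul_comm n q
    omega

lemma xi_target_le (hn : 2 ≤ n) {du dv : ℕ} (hdu : 1 ≤ du) (hdv : 1 ≤ dv)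
    (hxi : minEdgeDegree G ≤ du + dv - 2) :
    n * minEdgeDegree G + 2 * (n - 1) ≤ n * du + n * dv - 2 := by
  have h1 : n * minEdgeDegree G ≤ n * (du + dv - 2) := Nat.mul_le_mul_left _ hxi
  have h3 : n * du + n * dv = n * (du + dv - 2) + 2 * n := by
    rw [← Nat.mul_add, show 2 * n = n * 2 from Nat.mul_comm 2 n, ← Nat.mul_add,
      show du + dv - 2 + 2 = du + dv by omega]
  omega

end Core
section Core2
open Finset
open scoped Classical
variable {V : Type*} [Fintype V] [DecidableEq V] (G : SimpleGraph V) (n : ℕ)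

lemma sum_filter_fst_ne (f : V × V → ℕ) (w u : V) :
    ∑ q ∈ (opairs G).filter (fun q => q.1 = w ∧ q.2 ≠ u), f q
      = ∑ b ∈ (G.neighborFinset w).erase u, f (w, b) := by
  refine Finset.sum_nbij' (fun q => q.2) (fun b => (w, b)) ?_ ?_ ?_ ?_ ?_
  · rintro ⟨a, b⟩ hq
    simp only [mem_filter, mem_opairs] at hq
    obtain ⟨hadj, rfl, hne⟩ := hq
    exact Finset.mem_erase.2 ⟨hne, by simpa using hadj⟩
  · intro b hb
    rw [Finset.mem_erase, SimpleGraph.mem_neighborFinset] at hb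
    exact Finset.mem_filter.2 ⟨mem_opairs.2 (hb.2 : G.Adj w b), rfl, hb.1⟩
  · rintro ⟨a, b⟩ hq
    simp only [mem_filter] at hq
    rw [← hq.2.1]
  · intro b _
    rfl
  · rintro ⟨a, b⟩ hq
    simp only [mem_filter] at hq
    rw [← hq.2.1]

lemma neighbor_mem_2 {G : SimpleGraph V} {u w z : V} (hw : G.Adj u w) (hz : G.Adj u z)
    (hne : w ≠ z) : 2 ≤ G.degree u := by
  have hsub : ({w, z} : Finset V) ⊆ G.neighborFinset u := by
    intro b hb
    rcases Finset.mem_insert.1 hb with rfl | hb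
    · simpa using hw
    · rw [Finset.mem_singleton] at hb
      subst hb
      simpa using hz
  calc 2 = ({w, z} : Finset V).card := by rw [Finset.card_insert_of_notMem (by simpa using hne),
        Finset.card_singleton]
    _ ≤ (G.neighborFinset u).card := Finset.card_le_card hsub
    _ = G.degree u := G.card_neighborFinset_eq_degree u

lemma case2_bound (hn : 3 ≤ n)
    (x : V → ℕ) (hxn : ∀ w, x w ≤ n) {u v : V} (huv : G.Adj u v)
    (hu : 0 < x u) (hu' : x u < n) (hv : 0 < x v) (hv' : x v < n) :
    n * minEdgeDegree G + 2 * (n - 1) ≤ ∑ q ∈ opairs G, x q.1 * (n - x q.2) := by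
  classical
  set f : V × V → ℕ := fun q => x q.1 * (n - x q.2) with hf
  have hune : u ≠ v := huv.ne
  set A := (opairs G).filter (fun q => q.1 = u) with hA
  set B := (opairs G).filter (fun q => q.1 = v) with hB
  set C := (opairs G).filter (fun q => q.2 = u ∧ q.1 ∉ ({u, v} : Finset V)) with hC
  set D := (opairs G).filter (fun q => q.2 = v ∧ q.1 ∉ ({u, v} : Finset V)) with hD
  have dAB : Disjoint A B := by
    rw [Finset.disjoint_left]
    rintro q hqA hqB
    rw [hA, mem_filter] at hqA
    rw [hB, mem_filter] at hqB
    exact hune (hqA.2 ▸ hqB.2 ▸ rfl)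
  have dABC : Disjoint (A ∪ B) C := by
    rw [Finset.disjoint_left]
    rintro q hq hqC
    rw [hC, mem_filter] at hqC
    rcases Finset.mem_union.1 hq with h | h
    · rw [hA, mem_filter] at h
      exact hqC.2.2 (by simp [h.2])
    · rw [hB, mem_filter] at h
      exact hqC.2.2 (by simp [h.2])
  have dABCD : Disjoint (A ∪ B ∪ C) D := by
    rw [Finset.disjoint_left]
    rintro q hq hqD
    rw [hD, mem_filter] at hqD
    rcases Finset.mem_union.1 hq with h | h
    · rcases Finset.mem_union.1 h with h' | h'
      · rw [hA, mem_filter] at h'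
        exact hqD.2.2 (by simp [h'.2])
      · rw [hB, mem_filter] at h'
        exact hqD.2.2 (by simp [h'.2])
    · rw [hC, mem_filter] at h
      exact hune (h.2.1 ▸ hqD.2.1 ▸ rfl)
  have hsub : A ∪ B ∪ C ∪ D ⊆ opairs G := by
    intro q hq
    rcases Finset.mem_union.1 hq with h | h
    · rcases Finset.mem_union.1 h with h' | h'
      · rcases Finset.mem_union.1 h' with h'' | h''
        · exact Finset.mem_of_mem_filter _ h''
        · exact Finset.mem_of_mem_filter _ h''
      · exact Finset.mem_of_mem_filter _ h'
    · exact Finset.mem_of_mem_filter _ h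
  have hbig : ∑ q ∈ A ∪ B ∪ C ∪ D, f q ≤ ∑ q ∈ opairs G, f q :=
    Finset.sum_le_sum_of_subset hsub
  rw [Finset.sum_union dABCD, Finset.sum_union dABC, Finset.sum_union dAB] at hbig
  -- rewrite the four sums
  have hNuv : G.neighborFinset u \ ({u, v} : Finset V) = (G.neighborFinset u).erase v := by
    ext b
    simp only [Finset.mem_sdiff, Finset.mem_erase, Finset.mem_insert, Finset.mem_singleton,
      SimpleGraph.mem_neighborFinset]
    constructor
    · rintro ⟨hb, hne⟩
      exact ⟨fun h => hne (Or.inr h), hb⟩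
    · rintro ⟨hbv, hb⟩
      exact ⟨hb, fun h => h.elim (fun e => hb.ne' e) hbv⟩
  have hNvu : G.neighborFinset v \ ({u, v} : Finset V) = (G.neighborFinset v).erase u := by
    ext b
    simp only [Finset.mem_sdiff, Finset.mem_erase, Finset.mem_insert, Finset.mem_singleton,
      SimpleGraph.mem_neighborFinset]
    constructor
    · rintro ⟨hb, hne⟩
      exact ⟨fun h => hne (Or.inl h), hb⟩
    · rintro ⟨hbu, hb⟩
      exact ⟨hb, fun h => h.elim hbu (fun e => hb.ne' e)⟩
  have hAC : ∑ q ∈ A, f q + ∑ q ∈ C, f q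
      = x u * (n - x v) + ∑ b ∈ (G.neighborFinset u).erase v,
          (x u * (n - x b) + x b * (n - x u)) := by
    rw [hA, hC, sum_filter_fst, sum_filter_snd, hNuv,
      ← Finset.add_sum_erase _ _ (by simpa using huv), Finset.sum_add_distrib]
    ring
  have hBD : ∑ q ∈ B, f q + ∑ q ∈ D, f q
      = x v * (n - x u) + ∑ b ∈ (G.neighborFinset v).erase u,
          (x v * (n - x b) + x b * (n - x v)) := by
    rw [hB, hD, sum_filter_fst, sum_filter_snd, hNvu,
      ← Finset.add_sum_erase _ _ (by simpa using huv.symm), Finset.sum_add_distrib]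
    ring
  have hEu : ((G.neighborFinset u).erase v).card * n
      ≤ ∑ b ∈ (G.neighborFinset u).erase v, (x u * (n - x b) + x b * (n - x u)) := by
    have := Finset.card_nsmul_le_sum ((G.neighborFinset u).erase v)
      (fun b => x u * (n - x b) + x b * (n - x u)) n
      (fun b _ => gxy_ge_n n hu hu' (hxn b))
    simpa using this
  have hEv : ((G.neighborFinset v).erase u).card * n
      ≤ ∑ b ∈ (G.neighborFinset v).erase u, (x v * (n - x b) + x b * (n - x v)) := by
    have := Finset.card_nsmul_le_sum ((G.neighborFinset v).erase u)
      (fun b => x v * (n - x b) + x b * (n - x v)) n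
      (fun b _ => gxy_ge_n n hv hv' (hxn b))
    simpa using this
  have hcu : ((G.neighborFinset u).erase v).card = G.degree u - 1 := by
    rw [Finset.card_erase_of_mem (by simpa using huv), G.card_neighborFinset_eq_degree]
  have hcv : ((G.neighborFinset v).erase u).card = G.degree v - 1 := by
    rw [Finset.card_erase_of_mem (by simpa using huv.symm), G.card_neighborFinset_eq_degree]
  rw [hcu] at hEu
  rw [hcv] at hEv
  have hg2 : 2 * n - 2 ≤ x u * (n - x v) + x v * (n - x u) := g2_ge n hu hu' hv hv'
  have hdu : 1 ≤ G.degree u := by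
    rw [← G.card_neighborFinset_eq_degree]
    exact Finset.card_pos.2 ⟨v, by simpa using huv⟩
  have hdv : 1 ≤ G.degree v := by
    rw [← G.card_neighborFinset_eq_degree]
    exact Finset.card_pos.2 ⟨u, by simpa using huv.symm⟩
  have htarget := xi_target_le G n (by omega) hdu hdv (minEdgeDegree_le huv)
  have e1 : (G.degree u - 1) * n + 1 * n = G.degree u * n := by
    rw [← Nat.add_mul, show G.degree u - 1 + 1 = G.degree u by omega]
  have e2 : (G.degree v - 1) * n + 1 * n = G.degree v * n := by
    rw [← Nat.add_mul, show G.degree v - 1 + 1 = G.degree v by omega]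
  have c1 : G.degree u * n = n * G.degree u := Nat.mul_comm _ _
  have c2 : G.degree v * n = n * G.degree v := Nat.mul_comm _ _
  have hfinal : n * minEdgeDegree G + 2 * (n - 1)
      ≤ ∑ q ∈ A, f q + ∑ q ∈ B, f q + ∑ q ∈ C, f q + ∑ q ∈ D, f q := by omega
  exact hfinal.trans hbig

lemma case3a_bound (hn : 3 ≤ n)
    (x : V → ℕ) (hxn : ∀ w, x w ≤ n) {u w : V}
    (hu : 0 < x u) (hu' : x u < n) (huw : G.Adj u w) (hw : x w = n)
    (hpure : ∀ b, G.Adj u b → x b = 0 ∨ x b = n)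
    (hz : ∃ b, G.Adj u b ∧ x b = 0)
    (hk : G.degree w
      ≤ (((G.neighborFinset w).erase u).filter (fun b => x b < n)).card + (n - 2)) :
    n * minEdgeDegree G + 2 * (n - 1) ≤ ∑ q ∈ opairs G, x q.1 * (n - x q.2) := by
  classical
  obtain ⟨z, huz, hz0⟩ := hz
  have hwz : w ≠ z := by
    intro h
    rw [← h, hw] at hz0
    omega
  have huwne : u ≠ w := huw.ne
  set f : V × V → ℕ := fun q => x q.1 * (n - x q.2) with hf
  set A := (opairs G).filter (fun q => q.1 = u) with hA
  set C := (opairs G).filter (fun q => q.2 = u ∧ q.1 ∉ (∅ : Finset V)) with hC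
  set D := (opairs G).filter (fun q => q.1 = w ∧ q.2 ≠ u) with hD
  have dAC : Disjoint A C := by
    rw [Finset.disjoint_left]
    rintro q hqA hqC
    rw [hA, mem_filter] at hqA
    rw [hC, mem_filter] at hqC
    have : G.Adj q.1 q.2 := mem_opairs.1 hqA.1
    rw [hqA.2, hqC.2.1] at this
    exact G.loopless.irrefl u this
  have dACD : Disjoint (A ∪ C) D := by
    rw [Finset.disjoint_left]
    rintro q hq hqD
    rw [hD, mem_filter] at hqD
    rcases Finset.mem_union.1 hq with h | h
    · rw [hA, mem_filter] at h
      exact huwne (h.2.symm.trans hqD.2.1)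
    · rw [hC, mem_filter] at h
      exact hqD.2.2 h.2.1
  have hsub : A ∪ C ∪ D ⊆ opairs G := by
    intro q hq
    rcases Finset.mem_union.1 hq with h | h
    · rcases Finset.mem_union.1 h with h' | h'
      · exact Finset.mem_of_mem_filter _ h'
      · exact Finset.mem_of_mem_filter _ h'
    · exact Finset.mem_of_mem_filter _ h
  have hbig : ∑ q ∈ A ∪ C ∪ D, f q ≤ ∑ q ∈ opairs G, f q :=
    Finset.sum_le_sum_of_subset hsub
  rw [Finset.sum_union dACD, Finset.sum_union dAC] at hbig
  have hAC : ∑ q ∈ A, f q + ∑ q ∈ C, f q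
      = ∑ b ∈ G.neighborFinset u, (x u * (n - x b) + x b * (n - x u)) := by
    rw [hA, hC, sum_filter_fst, sum_filter_snd, Finset.sdiff_empty, Finset.sum_add_distrib]
  -- evaluate the sum over neighbors of u
  have hterm : ∀ b ∈ G.neighborFinset u, n ≤ x u * (n - x b) + x b * (n - x u) := by
    intro b hb
    rcases hpure b (by simpa using hb) with h0 | h1
    · rw [h0]
      have : 1 * (n - 0) ≤ x u * (n - 0) := Nat.mul_le_mul_right _ hu
      omega
    · rw [h1]
      have : n * 1 ≤ n * (n - x u) := Nat.mul_le_mul_left _ (by omega)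
      omega
  have hwmem : w ∈ G.neighborFinset u := by simpa using huw
  have hzmem : z ∈ (G.neighborFinset u).erase w :=
    Finset.mem_erase.2 ⟨(Ne.symm hwz), by simpa using huz⟩
  have hdu2 : 2 ≤ G.degree u := neighbor_mem_2 huw huz hwz
  have hrest : (((G.neighborFinset u).erase w).erase z).card * n
      ≤ ∑ b ∈ ((G.neighborFinset u).erase w).erase z,
          (x u * (n - x b) + x b * (n - x u)) := by
    have := Finset.card_nsmul_le_sum (((G.neighborFinset u).erase w).erase z)
      (fun b => x u * (n - x b) + x b * (n - x u)) n
      (fun b hb => hterm b (Finset.mem_of_mem_erase (Finset.mem_of_mem_erase hb)))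
    simpa using this
  have hcard2 : (((G.neighborFinset u).erase w).erase z).card = G.degree u - 2 := by
    rw [Finset.card_erase_of_mem hzmem, Finset.card_erase_of_mem hwmem,
      G.card_neighborFinset_eq_degree]
    omega
  rw [hcard2] at hrest
  have hsplitu : ∑ b ∈ G.neighborFinset u, (x u * (n - x b) + x b * (n - x u))
      = (x u * (n - x w) + x w * (n - x u)) + ((x u * (n - x z) + x z * (n - x u))
        + ∑ b ∈ ((G.neighborFinset u).erase w).erase z,
            (x u * (n - x b) + x b * (n - x u))) := by
    rw [← Finset.add_sum_erase _ _ hwmem, ← Finset.add_sum_erase _ _ hzmem]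
  -- the sum over D
  have hD' : ∑ q ∈ D, f q = ∑ b ∈ (G.neighborFinset w).erase u, n * (n - x b) := by
    rw [hD, sum_filter_fst_ne]
    exact Finset.sum_congr rfl (fun b _ => by simp [hf, hw])
  set kA := (((G.neighborFinset w).erase u).filter (fun b => x b < n)).card with hkA
  have hDge : kA * n ≤ ∑ q ∈ D, f q := by
    rw [hD']
    calc kA * n ≤ ∑ b ∈ ((G.neighborFinset w).erase u).filter (fun b => x b < n),
          n * (n - x b) := by
          refine Finset.card_nsmul_le_sum _ _ n (fun b hb => ?_)
          have hbn : x b < n := (Finset.mem_filter.1 hb).2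
          have : n * 1 ≤ n * (n - x b) := Nat.mul_le_mul_left _ (by omega)
          omega
      _ ≤ ∑ b ∈ (G.neighborFinset w).erase u, n * (n - x b) :=
          Finset.sum_le_sum_of_subset (Finset.filter_subset _ _)
  -- assemble
  have hvw : x u * (n - x w) + x w * (n - x u) = n * (n - x u) := by
    rw [hw, Nat.sub_self, Nat.mul_zero, Nat.zero_add]
  have hvz : x u * (n - x z) + x z * (n - x u) = x u * n := by
    rw [hz0, Nat.sub_zero, Nat.zero_mul, Nat.add_zero]
  have hdw1 : 1 ≤ G.degree w := by
    rw [← G.card_neighborFinset_eq_degree]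
    exact Finset.card_pos.2 ⟨u, by simpa using huw.symm⟩
  have hdu1 : 1 ≤ G.degree u := by omega
  have htarget := xi_target_le G n (by omega) hdu1 hdw1 (minEdgeDegree_le huw)
  -- numeric assembly
  have e0 : n * (n - x u) + x u * n = n * n := by
    have : x u * n = n * x u := Nat.mul_comm _ _
    rw [this, ← Nat.mul_add, show n - x u + x u = n by omega]
  have e1 : (G.degree u - 2) * n + 2 * n = G.degree u * n := by
    rw [← Nat.add_mul, show G.degree u - 2 + 2 = G.degree u by omega]
  have e2 : n * (kA + (n - 2)) = n * kA + n * (n - 2) := Nat.mul_add _ _ _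
  have e3 : n * G.degree w ≤ n * (kA + (n - 2)) := Nat.mul_le_mul_left _ hk
  have e5 : n * (n - 2) + n * 2 = n * n := by
    rw [← Nat.mul_add, show n - 2 + 2 = n by omega]
  have c1 : G.degree u * n = n * G.degree u := Nat.mul_comm _ _
  have c2 : kA * n = n * kA := Nat.mul_comm _ _
  have hfinal : n * minEdgeDegree G + 2 * (n - 1)
      ≤ ∑ q ∈ A, f q + ∑ q ∈ C, f q + ∑ q ∈ D, f q := by omega
  exact hfinal.trans hbig

end Core2
section Core3
open Finset
open scoped Classical
variable {V : Type*} [Fintype V] [DecidableEq V] (G : SimpleGraph V) (n : ℕ)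

lemma sum_swap_x (x : V → ℕ) (hxn : ∀ w, x w ≤ n) :
    ∑ q ∈ opairs G, (n - x q.1) * (n - (n - x q.2)) = ∑ q ∈ opairs G, x q.1 * (n - x q.2) := by
  rw [Finset.sum_congr rfl (fun q _ => by rw [Nat.sub_sub_self (hxn q.2)] :
    ∀ q ∈ opairs G, (n - x q.1) * (n - (n - x q.2)) = (n - x q.1) * x q.2)]
  refine Finset.sum_nbij' Prod.swap Prod.swap ?_ ?_ ?_ ?_ ?_
  · intro q hq
    exact mem_opairs.2 (mem_opairs.1 hq).symm
  · intro q hq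
    exact mem_opairs.2 (mem_opairs.1 hq).symm
  · intro q _; exact Prod.swap_swap q
  · intro q _; exact Prod.swap_swap q
  · intro q _
    simp only [Prod.fst_swap, Prod.snd_swap]
    ring

lemma fiber_bound (x : V → ℕ) {u : V} (hun : x u ≤ n)
    (hpureN : ∀ b ∈ G.neighborFinset u, x b = 0 ∨ x b = n)
    (A : Finset V) (hbA : ∀ b ∈ G.neighborFinset u, (b ∈ A ↔ x b = n))
    (hmin : u ∈ A → ((G.neighborFinset u).filter (fun w => x w = 0)).card
              ≤ ((G.neighborFinset u).filter (fun w => x w = n)).card)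
    (hmin' : u ∉ A → ((G.neighborFinset u).filter (fun w => x w = n)).card
              ≤ ((G.neighborFinset u).filter (fun w => x w = 0)).card)
    (hnpos : 0 < n) :
    ∑ b ∈ G.neighborFinset u,
        ((if u ∈ A ∧ b ∉ A then n ^ 2 else 0) + (if b ∈ A ∧ u ∉ A then n ^ 2 else 0))
      ≤ ∑ b ∈ G.neighborFinset u, (x u * (n - x b) + x b * (n - x u)) := by
  classical
  set P := ((G.neighborFinset u).filter (fun w => x w = n)).card with hP
  set Q := ((G.neighborFinset u).filter (fun w => x w = 0)).card with hQ
  -- RHS = P * (n * (n - x u)) + Q * (x u * n)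
  have hnotn : (G.neighborFinset u).filter (fun b => ¬ x b = n)
      = (G.neighborFinset u).filter (fun b => x b = 0) := by
    refine Finset.filter_congr (fun b hb => ?_)
    rcases hpureN b hb with h | h <;> simp [h, hnpos.ne, hnpos.ne']
  have hRHS : ∑ b ∈ G.neighborFinset u, (x u * (n - x b) + x b * (n - x u))
      = P * (n * (n - x u)) + Q * (x u * n) := by
    rw [← Finset.sum_filter_add_sum_filter_not (G.neighborFinset u) (fun b => x b = n)]
    congr 1
    · rw [Finset.sum_congr rfl (fun b hb => ?_), Finset.sum_const, smul_eq_mul]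
      have hbn : x b = n := (Finset.mem_filter.1 hb).2
      rw [hbn, Nat.sub_self, Nat.mul_zero, Nat.zero_add]
    · rw [hnotn, Finset.sum_congr rfl (fun b hb => ?_), Finset.sum_const, smul_eq_mul]
      have hb0 : x b = 0 := (Finset.mem_filter.1 hb).2
      rw [hb0, Nat.sub_zero, Nat.zero_mul, Nat.add_zero]
  rw [hRHS]
  have hkey : n * (n - x u) + x u * n = n * n := by
    rw [Nat.mul_comm (x u) n, ← Nat.mul_add, show n - x u + x u = n by omega]
  by_cases huA : u ∈ A
  · have hLHS : ∑ b ∈ G.neighborFinset u,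
        ((if u ∈ A ∧ b ∉ A then n ^ 2 else 0) + (if b ∈ A ∧ u ∉ A then n ^ 2 else 0))
        = Q * n ^ 2 := by
      have hstep : ∀ b ∈ G.neighborFinset u,
          ((if u ∈ A ∧ b ∉ A then n ^ 2 else 0) + (if b ∈ A ∧ u ∉ A then n ^ 2 else 0))
            = if x b = 0 then n ^ 2 else 0 := by
        intro b hb
        have h1 : b ∈ A ↔ x b = n := hbA b hb
        rcases hpureN b hb with h | h
        · have hbnA : b ∉ A := fun hm => by rw [h1, h] at hm; omega
          simp [huA, hbnA, h]
        · have hbA2 : b ∈ A := h1.2 h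
          simp [huA, hbA2, h, hnpos.ne']
      rw [Finset.sum_congr rfl hstep, ← Finset.sum_filter, Finset.sum_const, smul_eq_mul]
    rw [hLHS]
    have h1 := hmin huA
    have e1 : Q * (n * (n - x u)) ≤ P * (n * (n - x u)) := Nat.mul_le_mul_right _ h1
    have e2 : Q * (n * (n - x u)) + Q * (x u * n) = Q * (n * n) := by
      rw [← Nat.mul_add, hkey]
    have e3 : Q * n ^ 2 = Q * (n * n) := by ring
    omega
  · have hLHS : ∑ b ∈ G.neighborFinset u,
        ((if u ∈ A ∧ b ∉ A then n ^ 2 else 0) + (if b ∈ A ∧ u ∉ A then n ^ 2 else 0))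
        = P * n ^ 2 := by
      have hstep : ∀ b ∈ G.neighborFinset u,
          ((if u ∈ A ∧ b ∉ A then n ^ 2 else 0) + (if b ∈ A ∧ u ∉ A then n ^ 2 else 0))
            = if x b = n then n ^ 2 else 0 := by
        intro b hb
        have h1 : b ∈ A ↔ x b = n := hbA b hb
        rcases hpureN b hb with h | h
        · have hbnA : b ∉ A := fun hm => by rw [h1, h] at hm; omega
          simp [huA, hbnA, h, hnpos.ne]
        · have hbA2 : b ∈ A := h1.2 h
          simp [huA, hbA2, h]
      rw [Finset.sum_congr rfl hstep, ← Finset.sum_filter, Finset.sum_const, smul_eq_mul]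
    rw [hLHS]
    have h1 := hmin' huA
    have e1 : P * (x u * n) ≤ Q * (x u * n) := Nat.mul_le_mul_right _ h1
    have e2 : P * (n * (n - x u)) + P * (x u * n) = P * (n * n) := by
      rw [← Nat.mul_add, hkey]
    have e3 : P * n ^ 2 = P * (n * n) := by ring
    omega

end Core3
section Core4
open Finset
open scoped Classical
variable {V : Type*} [Fintype V] [DecidableEq V] (G : SimpleGraph V) (n : ℕ)

lemma case3b_bound (hn : 3 ≤ n)
    (x : V → ℕ) (hxn : ∀ w, x w ≤ n)
    (h0 : ∃ u, 0 < x u) (h0' : ∃ u, x u < n)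
    (hC1 : ∀ u, 0 < x u → ∃ v, G.Adj u v ∧ 0 < x v)
    (hC2 : ∀ u, x u < n → ∃ v, G.Adj u v ∧ x v < n)
    (hInd : ∀ u v, G.Adj u v → ¬((0 < x u ∧ x u < n) ∧ (0 < x v ∧ x v < n)))
    (hnA : ∀ u w, 0 < x u → x u < n → G.Adj u w → x w = n →
      (((G.neighborFinset w).erase u).filter (fun b => x b < n)).card + (n - 2) < G.degree w)
    (hnZ : ∀ u w, 0 < x u → x u < n → G.Adj u w → x w = 0 →
      (((G.neighborFinset w).erase u).filter (fun b => 0 < x b)).card + (n - 2) < G.degree w) :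
    ∃ A : Finset V, IsRestrictedEdgeCut G ↑(bcut G A) ∧
      n ^ 2 * (bcut G A).card ≤ ∑ q ∈ opairs G, x q.1 * (n - x q.2) := by
  classical
  have hnpos : 0 < n := by omega
  set pv : V → ℕ := fun v => ((G.neighborFinset v).filter (fun w => x w = n)).card with hpv
  set qv : V → ℕ := fun v => ((G.neighborFinset v).filter (fun w => x w = 0)).card with hqv
  set A : Finset V :=
    univ.filter (fun v => x v = n ∨ (0 < x v ∧ x v < n ∧ qv v < pv v)) with hAdef
  have hmemA : ∀ v, v ∈ A ↔ (x v = n ∨ (0 < x v ∧ x v < n ∧ qv v < pv v)) := by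
    intro v; simp [hAdef]
  have hpure_mem : ∀ v, ¬(0 < x v ∧ x v < n) → (v ∈ A ↔ x v = n) := by
    intro v hv
    rw [hmemA]
    constructor
    · rintro (h | h)
      · exact h
      · exact absurd ⟨h.1, h.2.1⟩ hv
    · exact Or.inl
  have hadj_pure : ∀ u b, G.Adj u b → 0 < x u → x u < n → x b = 0 ∨ x b = n := by
    intro u b hadj hu1 hu2
    have hI := hInd u b hadj
    have hb := hxn b
    by_contra hc
    push_neg at hc
    exact hI ⟨⟨hu1, hu2⟩, by omega⟩
  have hp1 : ∀ v, 0 < x v → x v < n → 1 ≤ pv v := by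
    intro v h1 h2
    obtain ⟨w, hw, hw0⟩ := hC1 v h1
    have hwn : x w = n := by
      rcases hadj_pure v w hw h1 h2 with h | h
      · omega
      · exact h
    exact Finset.card_pos.2 ⟨w, Finset.mem_filter.2 ⟨by simpa using hw, hwn⟩⟩
  have hq1 : ∀ v, 0 < x v → x v < n → 1 ≤ qv v := by
    intro v h1 h2
    obtain ⟨w, hw, hw0⟩ := hC2 v h2
    have hwn : x w = 0 := by
      rcases hadj_pure v w hw h1 h2 with h | h
      · exact h
      · omega
    exact Finset.card_pos.2 ⟨w, Finset.mem_filter.2 ⟨by simpa using hw, hwn⟩⟩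
  have hsameA : ∀ v, x v = n → ∃ w, G.Adj v w ∧ x w = n := by
    intro v hv
    by_cases hM : ∃ u, G.Adj v u ∧ 0 < x u ∧ x u < n
    · obtain ⟨u, huvadj, hu1, hu2⟩ := hM
      have hkey := hnA u v hu1 hu2 huvadj.symm hv
      by_contra hall
      push_neg at hall
      have hsub : (G.neighborFinset v).erase u
          ⊆ ((G.neighborFinset v).erase u).filter (fun b => x b < n) := by
        intro b hb
        refine Finset.mem_filter.2 ⟨hb, ?_⟩
        have hbv : G.Adj v b := by simpa using Finset.mem_of_mem_erase hb
        have h1 := hall b hbv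
        have h2 := hxn b
        omega
      have hcard : G.degree v - 1
          ≤ (((G.neighborFinset v).erase u).filter (fun b => x b < n)).card := by
        calc G.degree v - 1 = ((G.neighborFinset v).erase u).card := by
              rw [Finset.card_erase_of_mem (by simpa using huvadj),
                G.card_neighborFinset_eq_degree]
          _ ≤ _ := Finset.card_le_card hsub
      have hdv : 1 ≤ G.degree v := by
        rw [← G.card_neighborFinset_eq_degree]
        exact Finset.card_pos.2 ⟨u, by simpa using huvadj⟩
      omega
    · push_neg at hM
      obtain ⟨w, hw, hw0⟩ := hC1 v (by omega)
      have h1 := hM w hw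
      have h2 := hxn w
      exact ⟨w, hw, by omega⟩
  have hsameZ : ∀ v, x v = 0 → ∃ w, G.Adj v w ∧ x w = 0 := by
    intro v hv
    by_cases hM : ∃ u, G.Adj v u ∧ 0 < x u ∧ x u < n
    · obtain ⟨u, huvadj, hu1, hu2⟩ := hM
      have hkey := hnZ u v hu1 hu2 huvadj.symm hv
      by_contra hall
      push_neg at hall
      have hsub : (G.neighborFinset v).erase u
          ⊆ ((G.neighborFinset v).erase u).filter (fun b => 0 < x b) := by
        intro b hb
        refine Finset.mem_filter.2 ⟨hb, ?_⟩
        have hbv : G.Adj v b := by simpa using Finset.mem_of_mem_erase hb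
        have h1 := hall b hbv
        omega
      have hcard : G.degree v - 1
          ≤ (((G.neighborFinset v).erase u).filter (fun b => 0 < x b)).card := by
        calc G.degree v - 1 = ((G.neighborFinset v).erase u).card := by
              rw [Finset.card_erase_of_mem (by simpa using huvadj),
                G.card_neighborFinset_eq_degree]
          _ ≤ _ := Finset.card_le_card hsub
      have hdv : 1 ≤ G.degree v := by
        rw [← G.card_neighborFinset_eq_degree]
        exact Finset.card_pos.2 ⟨u, by simpa using huvadj⟩
      omega
    · push_neg at hM
      obtain ⟨w, hw, hw0⟩ := hC2 v (by omega)
      have h1 := hM w hw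
      exact ⟨w, hw, by omega⟩
  -- every vertex has a same-side neighbour
  have hside : ∀ v, ∃ w, G.Adj v w ∧ (v ∈ A ↔ w ∈ A) := by
    intro v
    by_cases hmix : 0 < x v ∧ x v < n
    · by_cases hqp : qv v < pv v
      · have hvA : v ∈ A := (hmemA v).2 (Or.inr ⟨hmix.1, hmix.2, hqp⟩)
        obtain ⟨w, hw⟩ := Finset.card_pos.1 (lt_of_lt_of_le Nat.zero_lt_one
          (hp1 v hmix.1 hmix.2))
        rw [Finset.mem_filter, SimpleGraph.mem_neighborFinset] at hw
        have hwA : w ∈ A := (hpure_mem w (by omega)).2 hw.2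
        exact ⟨w, hw.1, iff_of_true hvA hwA⟩
      · have hvA : v ∉ A := by
          rw [hmemA]
          rintro (h | h)
          · omega
          · exact hqp h.2.2
        obtain ⟨w, hw⟩ := Finset.card_pos.1 (lt_of_lt_of_le Nat.zero_lt_one
          (hq1 v hmix.1 hmix.2))
        rw [Finset.mem_filter, SimpleGraph.mem_neighborFinset] at hw
        have hwA : w ∉ A := fun hm => by
          rw [hpure_mem w (by omega)] at hm
          omega
        exact ⟨w, hw.1, iff_of_false hvA hwA⟩
    · have hvpure : x v = 0 ∨ x v = n := by
        have := hxn v; omega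
      rcases hvpure with h | h
      · obtain ⟨w, hw, hw0⟩ := hsameZ v h
        have hvA : v ∉ A := fun hm => by
          rw [hpure_mem v hmix] at hm
          omega
        have hwA : w ∉ A := fun hm => by
          rw [hpure_mem w (by omega)] at hm
          omega
        exact ⟨w, hw, iff_of_false hvA hwA⟩
      · obtain ⟨w, hw, hwn⟩ := hsameA v h
        have hvA : v ∈ A := (hpure_mem v hmix).2 h
        have hwA : w ∈ A := (hpure_mem w (by omega)).2 hwn
        exact ⟨w, hw, iff_of_true hvA hwA⟩
  have hAne : A.Nonempty := by
    obtain ⟨u, hu⟩ := h0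
    by_cases hmix : x u < n
    · obtain ⟨w, hw⟩ := Finset.card_pos.1 (lt_of_lt_of_le Nat.zero_lt_one (hp1 u hu hmix))
      rw [Finset.mem_filter] at hw
      exact ⟨w, (hpure_mem w (by have := hw.2; omega)).2 hw.2⟩
    · have : x u = n := by have := hxn u; omega
      exact ⟨u, (hmemA u).2 (Or.inl this)⟩
  have hAne' : ∃ v, v ∉ A := by
    obtain ⟨u, hu⟩ := h0'
    by_cases hmix : 0 < x u
    · obtain ⟨w, hw⟩ := Finset.card_pos.1 (lt_of_lt_of_le Nat.zero_lt_one (hq1 u hmix hu))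
      rw [Finset.mem_filter] at hw
      refine ⟨w, fun hm => ?_⟩
      rw [hpure_mem w (by have := hw.2; omega)] at hm
      have := hw.2
      omega
    · refine ⟨u, fun hm => ?_⟩
      rw [hpure_mem u (by omega)] at hm
      omega
  refine ⟨A, bcut_isRestricted hside hAne hAne', ?_⟩
  -- the counting estimate
  rw [card_bcut,
    show (ocut G A) = (opairs G).filter (fun q => q.1 ∈ A ∧ q.2 ∉ A) from rfl,
    Finset.card_filter, Finset.mul_sum,
    Finset.sum_congr rfl (fun q _ => by split <;> simp :
      ∀ q ∈ opairs G, n ^ 2 * (if q.1 ∈ A ∧ q.2 ∉ A then 1 else 0)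
        = (if q.1 ∈ A ∧ q.2 ∉ A then n ^ 2 else 0))]
  rw [← Finset.sum_filter_add_sum_filter_not (opairs G)
    (fun q => (0 < x q.1 ∧ x q.1 < n) ∨ (0 < x q.2 ∧ x q.2 < n))]
  conv_rhs => rw [← Finset.sum_filter_add_sum_filter_not (opairs G)
    (fun q => (0 < x q.1 ∧ x q.1 < n) ∨ (0 < x q.2 ∧ x q.2 < n))]
  refine Nat.add_le_add ?_ ?_
  · -- mixed pairs, via fiberwise decomposition
    set Mset : Finset V := univ.filter (fun v => 0 < x v ∧ x v < n) with hMset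
    have hmaps : ∀ q ∈ (opairs G).filter
        (fun q => (0 < x q.1 ∧ x q.1 < n) ∨ (0 < x q.2 ∧ x q.2 < n)),
        (if 0 < x q.1 ∧ x q.1 < n then q.1 else q.2) ∈ Mset := by
      intro q hq
      rw [mem_filter] at hq
      by_cases h : 0 < x q.1 ∧ x q.1 < n
      · rw [if_pos h, hMset, mem_filter]
        exact ⟨mem_univ _, h⟩
      · rcases hq.2 with hL | hR
        · exact absurd hL h
        · rw [if_neg h, hMset, mem_filter]
          exact ⟨mem_univ _, hR⟩
    rw [← Finset.sum_fiberwise_of_maps_to hmaps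
      (fun q => if q.1 ∈ A ∧ q.2 ∉ A then n ^ 2 else 0),
      ← Finset.sum_fiberwise_of_maps_to hmaps (fun q => x q.1 * (n - x q.2))]
    refine Finset.sum_le_sum (fun u hu => ?_)
    rw [hMset, mem_filter] at hu
    obtain ⟨-, hu1, hu2⟩ := hu
    have hfib : ((opairs G).filter
        (fun q => (0 < x q.1 ∧ x q.1 < n) ∨ (0 < x q.2 ∧ x q.2 < n))).filter
          (fun q => (if 0 < x q.1 ∧ x q.1 < n then q.1 else q.2) = u)
        = (opairs G).filter (fun q => q.1 = u)
          ∪ (opairs G).filter (fun q => q.2 = u ∧ q.1 ∉ (∅ : Finset V)) := by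
      ext q
      simp only [mem_filter, mem_union, Finset.notMem_empty, not_false_iff, and_true]
      constructor
      · rintro ⟨⟨hq, hPq⟩, hμ⟩
        by_cases h : 0 < x q.1 ∧ x q.1 < n
        · rw [if_pos h] at hμ
          exact Or.inl ⟨hq, hμ⟩
        · rw [if_neg h] at hμ
          exact Or.inr ⟨hq, hμ⟩
      · rintro (⟨hq, h1⟩ | ⟨hq, h2⟩)
        · refine ⟨⟨hq, Or.inl (h1 ▸ ⟨hu1, hu2⟩)⟩, ?_⟩
          rw [if_pos (h1 ▸ ⟨hu1, hu2⟩)]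
          exact h1
        · have hadjq : G.Adj q.1 q.2 := mem_opairs.1 hq
          have hnm : ¬(0 < x q.1 ∧ x q.1 < n) := by
            intro hc
            exact hInd q.1 u (h2 ▸ hadjq) ⟨hc, hu1, hu2⟩
          refine ⟨⟨hq, Or.inr (h2 ▸ ⟨hu1, hu2⟩)⟩, ?_⟩
          rw [if_neg hnm]
          exact h2
    rw [hfib]
    have hdisj : Disjoint ((opairs G).filter (fun q => q.1 = u))
        ((opairs G).filter (fun q => q.2 = u ∧ q.1 ∉ (∅ : Finset V))) := by
      rw [Finset.disjoint_left]
      rintro q hq1 hq2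
      rw [mem_filter] at hq1 hq2
      have : G.Adj q.1 q.2 := mem_opairs.1 hq1.1
      rw [hq1.2, hq2.2.1] at this
      exact G.loopless.irrefl u this
    rw [Finset.sum_union hdisj, Finset.sum_union hdisj,
      sum_filter_fst, sum_filter_fst, sum_filter_snd, sum_filter_snd,
      Finset.sdiff_empty, ← Finset.sum_add_distrib, ← Finset.sum_add_distrib]
    refine fiber_bound G n x (hxn u) ?_ A ?_ ?_ ?_ hnpos
    · exact fun b hb => hadj_pure u b (by simpa using hb) hu1 hu2
    · intro b hb
      apply hpure_mem
      have := hadj_pure u b (by simpa using hb) hu1 hu2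
      omega
    · intro huA
      rcases (hmemA u).1 huA with h | h
      · omega
      · exact le_of_lt h.2.2
    · intro huA
      by_contra hc
      push_neg at hc
      exact huA ((hmemA u).2 (Or.inr ⟨hu1, hu2, hc⟩))
  · -- pure pairs : pointwise bound
    refine Finset.sum_le_sum (fun q hq => ?_)
    rw [mem_filter] at hq
    have h1 : ¬(0 < x q.1 ∧ x q.1 < n) := fun hc => hq.2 (Or.inl hc)
    have h2 : ¬(0 < x q.2 ∧ x q.2 < n) := fun hc => hq.2 (Or.inr hc)
    by_cases hc : q.1 ∈ A ∧ q.2 ∉ A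
    · have hx1 : x q.1 = n := (hpure_mem _ h1).1 hc.1
      have hx2 : x q.2 = 0 := by
        have hne : ¬ x q.2 = n := fun hn2 => hc.2 ((hpure_mem _ h2).2 hn2)
        have := hxn q.2
        omega
      rw [if_pos hc, hx1, hx2, Nat.sub_zero, pow_two]
    · rw [if_neg hc]
      exact Nat.zero_le _

end Core4
section Core5
open Finset
open scoped Classical
variable {V : Type*} [Fintype V] [DecidableEq V] (G : SimpleGraph V) (n : ℕ)

lemma core_lower (hn : 3 ≤ n)
    (x : V → ℕ) (hxn : ∀ w, x w ≤ n)
    (h0 : ∃ u, 0 < x u) (h0' : ∃ u, x u < n)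
    (hC1 : ∀ u, 0 < x u → ∃ v, G.Adj u v ∧ 0 < x v)
    (hC2 : ∀ u, x u < n → ∃ v, G.Adj u v ∧ x v < n) :
    min ((n * minEdgeDegree G + 2 * (n - 1) : ℕ) : ℕ∞)
      (((n ^ 2 : ℕ) : ℕ∞) * restrictedEdgeConn G)
      ≤ ((∑ q ∈ opairs G, x q.1 * (n - x q.2) : ℕ) : ℕ∞) := by
  classical
  have hnpos : 0 < n := by omega
  by_cases hMM : ∃ u v, G.Adj u v ∧ (0 < x u ∧ x u < n) ∧ (0 < x v ∧ x v < n)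
  · obtain ⟨u, v, huv, hu, hv⟩ := hMM
    refine le_trans (min_le_left _ _) ?_
    exact_mod_cast case2_bound G n hn x hxn huv hu.1 hu.2 hv.1 hv.2
  · have hInd : ∀ u v, G.Adj u v → ¬((0 < x u ∧ x u < n) ∧ (0 < x v ∧ x v < n)) :=
      fun u v h hc => hMM ⟨u, v, h, hc.1, hc.2⟩
    have hpureNbr : ∀ u b, (0 < x u ∧ x u < n) → G.Adj u b → x b = 0 ∨ x b = n := by
      intro u b hu hb
      have h1 := hInd u b hb
      have h2 := hxn b
      by_contra hc
      push_neg at hc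
      exact h1 ⟨hu, by omega⟩
    by_cases h3A : ∃ u w, (0 < x u ∧ x u < n) ∧ G.Adj u w ∧ x w = n ∧
        G.degree w ≤ (((G.neighborFinset w).erase u).filter (fun b => x b < n)).card + (n - 2)
    · obtain ⟨u, w, hu, huw, hw, hk⟩ := h3A
      refine le_trans (min_le_left _ _) ?_
      have hpure : ∀ b, G.Adj u b → x b = 0 ∨ x b = n := fun b hb => hpureNbr u b hu hb
      have hz : ∃ b, G.Adj u b ∧ x b = 0 := by
        obtain ⟨b, hb, hbn⟩ := hC2 u hu.2
        rcases hpure b hb with h | h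
        · exact ⟨b, hb, h⟩
        · omega
      exact_mod_cast case3a_bound G n hn x hxn hu.1 hu.2 huw hw hpure hz hk
    · by_cases h3Z : ∃ u w, (0 < x u ∧ x u < n) ∧ G.Adj u w ∧ x w = 0 ∧
          G.degree w ≤ (((G.neighborFinset w).erase u).filter (fun b => 0 < x b)).card + (n - 2)
      · obtain ⟨u, w, hu, huw, hw, hk⟩ := h3Z
        refine le_trans (min_le_left _ _) ?_
        have hswap := sum_swap_x G n x hxn
        have hpure : ∀ b, G.Adj u b → x b = 0 ∨ x b = n := fun b hb => hpureNbr u b hu hb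
        have hpure' : ∀ b, G.Adj u b → n - x b = 0 ∨ n - x b = n := by
          intro b hb
          rcases hpure b hb with h | h
          · rw [h]; right; omega
          · rw [h]; left; omega
        have hz' : ∃ b, G.Adj u b ∧ n - x b = 0 := by
          obtain ⟨b, hb, hbn⟩ := hC1 u hu.1
          rcases hpure b hb with h | h
          · omega
          · exact ⟨b, hb, by omega⟩
        have hk' : G.degree w
            ≤ (((G.neighborFinset w).erase u).filter (fun b => n - x b < n)).card + (n - 2) := by
          have : ((G.neighborFinset w).erase u).filter (fun b => n - x b < n)
              = ((G.neighborFinset w).erase u).filter (fun b => 0 < x b) := by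
            refine Finset.filter_congr (fun b _ => ?_)
            have := hxn b
            constructor
            · intro h; by_contra hc; push_neg at hc; omega
            · intro h; omega
          rw [this]
          exact hk
        have hmain := case3a_bound G n hn (fun v => n - x v) (fun w => Nat.sub_le _ _)
          (by omega : 0 < n - x u) (by omega : n - x u < n) huw
          (by rw [hw, Nat.sub_zero] : n - x w = n) hpure' hz' hk'
        calc ((n * minEdgeDegree G + 2 * (n - 1) : ℕ) : ℕ∞)
            ≤ ((∑ q ∈ opairs G, (n - x q.1) * (n - (n - x q.2)) : ℕ) : ℕ∞) := by
              exact_mod_cast hmain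
          _ = _ := by rw [hswap]
      · have hInd' : ∀ u w, 0 < x u → x u < n → G.Adj u w → x w = n →
            (((G.neighborFinset w).erase u).filter (fun b => x b < n)).card + (n - 2)
              < G.degree w := by
          intro u w h1 h2 h3 h4
          by_contra hc
          push_neg at hc
          exact h3A ⟨u, w, ⟨h1, h2⟩, h3, h4, hc⟩
        have hInd'' : ∀ u w, 0 < x u → x u < n → G.Adj u w → x w = 0 →
            (((G.neighborFinset w).erase u).filter (fun b => 0 < x b)).card + (n - 2)
              < G.degree w := by
          intro u w h1 h2 h3 h4
          by_contra hc
          push_neg at hc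
          exact h3Z ⟨u, w, ⟨h1, h2⟩, h3, h4, hc⟩
        obtain ⟨A, hcut, hbound⟩ :=
          case3b_bound G n hn x hxn h0 h0' hC1 hC2 hInd hInd' hInd''
        refine le_trans (min_le_right _ _) ?_
        calc ((n ^ 2 : ℕ) : ℕ∞) * restrictedEdgeConn G
            ≤ ((n ^ 2 : ℕ) : ℕ∞) * ((bcut G A).card : ℕ∞) :=
              mul_le_mul_right (restrictedEdgeConn_le hcut) _
          _ = ((n ^ 2 * (bcut G A).card : ℕ) : ℕ∞) := by push_cast; ring
          _ ≤ _ := by exact_mod_cast hbound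

end Core5

theorem stmt13 {V : Type*} [Fintype V] (G : SimpleGraph V) (hG : G.Connected)
    (hV : 2 ≤ Fintype.card V) (n : ℕ) (hn : 3 ≤ n) :
    restrictedEdgeConn (totalProd G n) =
      min ((n * minEdgeDegree G + 2 * (n - 1) : ℕ) : ℕ∞)
        (((n ^ 2 : ℕ) : ℕ∞) * restrictedEdgeConn G) := by
  classical
  have : DecidableEq V := Classical.decEq V
  have hneV : Nonempty V := hG.nonempty
  haveI : Nonempty (V × Fin n) := ⟨(Classical.arbitrary V, ⟨0, by omega⟩)⟩
  refine le_antisymm ?_ ?_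
  · exact le_min (upper_xi G n hG hV hn) (upper_lift G n hG hn)
  · refine le_sInf ?_
    rintro k ⟨F, hF, rfl⟩
    obtain ⟨S, hS1, hS2, hS3, hS4, hS5⟩ := exists_side_of_restricted hF
    have hxn : ∀ u, colCard' n S u ≤ n := fun u => colCard_le n S u
    have h0 : ∃ u, 0 < colCard' n S u := by
      obtain ⟨⟨u, i⟩, hui⟩ := hS1
      exact ⟨u, colCard_pos n hui⟩
    have h0' : ∃ u, colCard' n S u < n := by
      obtain ⟨⟨u, i⟩, hui⟩ := hS2
      exact ⟨u, colCard_lt n hui⟩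
    have hcol_ex : ∀ u, 0 < colCard' n S u → ∃ i, (u, i) ∈ S := by
      intro u hu
      by_contra hc
      push_neg at hc
      have : colCard' n S u = 0 := by
        rw [colCard', Finset.card_eq_zero]
        ext i
        simp [hc i]
      omega
    have hcol_ex' : ∀ u, colCard' n S u < n → ∃ i, (u, i) ∉ S := by
      intro u hu
      by_contra hc
      push_neg at hc
      have : colCard' n S u = n := by
        rw [colCard']
        rw [Finset.filter_true_of_mem (fun i _ => hc i), Finset.card_univ, Fintype.card_fin]
      omega
    have hC1 : ∀ u, 0 < colCard' n S u → ∃ v, G.Adj u v ∧ 0 < colCard' n S v := by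
      intro u hu
      obtain ⟨i, hi⟩ := hcol_ex u hu
      obtain ⟨⟨v, j⟩, hvj, hadj⟩ := hS3 (u, i) hi
      exact ⟨v, (totalProd_adj G n).1 hadj, colCard_pos n hvj⟩
    have hC2 : ∀ u, colCard' n S u < n → ∃ v, G.Adj u v ∧ colCard' n S v < n := by
      intro u hu
      obtain ⟨i, hi⟩ := hcol_ex' u hu
      obtain ⟨⟨v, j⟩, hvj, hadj⟩ := hS4 (u, i) hi
      exact ⟨v, (totalProd_adj G n).1 hadj, colCard_lt n hvj⟩
    have hmin := core_lower G n hn (fun u => colCard' n S u) hxn h0 h0' hC1 hC2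
    calc min ((n * minEdgeDegree G + 2 * (n - 1) : ℕ) : ℕ∞)
          (((n ^ 2 : ℕ) : ℕ∞) * restrictedEdgeConn G)
        ≤ ((∑ q ∈ opairs G, colCard' n S q.1 * (n - colCard' n S q.2) : ℕ) : ℕ∞) := hmin
      _ = ((bcut (totalProd G n) S).card : ℕ∞) := by
          rw [card_bcut, sum_formula]
      _ ≤ (F.card : ℕ∞) := by exact_mod_cast hS5
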